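/- Let n ≥ 1 and let x₁, …, xₙ be real numbers belonging to a real algebraic number field of degree n+1 over ℚ, such that 1, x₁, …, xₙ are linearly independent over ℚ. Then there is a constant c > 0 such that max over j of ‖k·xⱼ‖ ≥ c·k^{-1/n} for every positive integer k. -/

import Mathlib

set_option maxHeartbeats 1000000

/-- Distance from a real number to the nearest integer. -/
noncomputable def dnint (y : ℝ) : ℝ := ⨅ m : ℤ, |y - m|

lemma dnint_round_le (y : ℝ) (m : ℤ) : |y - round y| ≤ |y - (m:ℝ)| := by
  by_cases h : m = round y
  · subst h; rfl
  · have h1 : (1:ℝ) ≤ |(round y : ℝ) - (m:ℝ)| := by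
      have : (1:ℤ) ≤ |round y - m| := Int.one_le_abs (sub_ne_zero.mpr (Ne.symm h))
      have : ((1:ℤ):ℝ) ≤ (|round y - m| : ℤ) := Int.cast_le.mpr this
      rw [Int.cast_abs] at this
      push_cast at this ⊢
      linarith
    have h2 := abs_sub_round y
    have h3 : |(round y:ℝ) - m| ≤ |(round y:ℝ) - y| + |y - m| := abs_sub_le _ _ _
    have h4 : |(round y:ℝ) - y| = |y - round y| := abs_sub_comm _ _
    linarith

lemma dnint_eq (y : ℝ) : dnint y = |y - round y| := by
  apply le_antisymm
  · exact ciInf_le ⟨0, by rintro z ⟨m, rfl⟩; positivity⟩ (round y)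
  · exact le_ciInf (dnint_round_le y)

lemma core (n : ℕ) (hn : 1 ≤ n) (x : Fin n → ℝ)
    (K : Subfield ℝ) (hK : Module.finrank ℚ K = n + 1)
    (hxK : ∀ j, x j ∈ K)
    (hli : LinearIndependent ℚ (Fin.cons (1 : ℝ) x : Fin (n + 1) → ℝ)) :
    ∃ A : ℝ, 1 ≤ A ∧ ∀ (k : ℕ), 1 ≤ k → ∀ p : Fin n → ℤ, ∀ ε : ℝ,
      (∀ j, |(k:ℝ) * x j - p j| ≤ ε) → ε ≤ 1 →
      1 ≤ A * k * ε ^ n := by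
  classical
  haveI : FiniteDimensional ℚ K :=
    FiniteDimensional.of_finrank_pos (by rw [hK]; omega)
  -- the basis
  set b : Fin (n+1) → K := Fin.cons 1 (fun j => ⟨x j, hxK j⟩) with hb
  have hcomp : (K.subtype.toRatAlgHom.toLinearMap : K →ₗ[ℚ] ℝ) ∘ b
      = Fin.cons (1 : ℝ) x := by
    funext i
    refine Fin.cases ?_ (fun j => ?_) i <;> simp [hb, RingHom.toRatAlgHom]
  have hlib : LinearIndependent ℚ b := by
    apply LinearIndependent.of_comp (K.subtype.toRatAlgHom.toLinearMap : K →ₗ[ℚ] ℝ)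
    rw [hcomp]; exact hli
  have hcard : Fintype.card (Fin (n+1)) = Module.finrank ℚ K := by simp [hK]
  set B : Module.Basis (Fin (n+1)) ℚ K := basisOfLinearIndependentOfCardEqFinrank hlib hcard with hB
  have hBb : ∀ i, B i = b i := fun i => by
    rw [hB, coe_basisOfLinearIndependentOfCardEqFinrank]
  -- dual basis
  set Bd : Module.Basis (Fin (n+1)) ℚ K :=
    (Algebra.traceForm ℚ K).dualBasis (traceForm_nondegenerate ℚ K) B with hBd
  have htr : ∀ i j, Algebra.trace ℚ K (Bd i * B j) = if j = i then 1 else 0 := by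
    intro i j
    have := (Algebra.traceForm ℚ K).apply_dualBasis_left
      (traceForm_nondegenerate ℚ K) B i j
    rwa [Algebra.traceForm_apply] at this
  -- embeddings
  have hcardE : Fintype.card (K →ₐ[ℚ] ℂ) = n + 1 := by
    rw [AlgHom.card, hK]
  set σ₀ : K →ₐ[ℚ] ℂ := (Complex.ofRealHom.comp K.subtype).toRatAlgHom with hσ₀
  have hσ₀app : ∀ y : K, σ₀ y = ((y : ℝ) : ℂ) := fun y => rfl
  -- orthogonality
  have key : ∀ σ : K →ₐ[ℚ] ℂ, σ ≠ σ₀ → ∑ i, σ₀ (B i) * σ (Bd i) = 0 := by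
    have e : Fin (n+1) ≃ (K →ₐ[ℚ] ℂ) :=
      Fintype.equivOfCardEq (by rw [hcardE]; simp)
    set M : Matrix (Fin (n+1)) (Fin (n+1)) ℂ := fun i t => (e t) (B i) with hM
    set N : Matrix (Fin (n+1)) (Fin (n+1)) ℂ := fun t j => (e t) (Bd j) with hN
    have hMN : M * N = 1 := by
      ext i j
      rw [Matrix.mul_apply]
      have : ∑ t, M i t * N t j = ∑ σ : K →ₐ[ℚ] ℂ, σ (B i * Bd j) := by
        rw [← e.sum_comp]
        exact Finset.sum_congr rfl fun t _ => by rw [hM, hN, map_mul]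
      rw [this, ← trace_eq_sum_embeddings, mul_comm, htr]
      by_cases h : i = j <;> simp [h, Matrix.one_apply]
    have hNM : N * M = 1 := mul_eq_one_comm.mp hMN
    intro σ hσ
    have h2 := congrArg (fun P => P (e.symm σ) (e.symm σ₀)) hNM
    simp only [Matrix.mul_apply, Matrix.one_apply] at h2
    rw [if_neg (fun h => hσ (by simpa using e.symm.injective h))] at h2
    calc ∑ i, σ₀ (B i) * σ (Bd i) = ∑ i, N (e.symm σ) i * M i (e.symm σ₀) := by
          refine Finset.sum_congr rfl fun i _ => ?_
          show σ₀ (B i) * σ (Bd i) = (e (e.symm σ)) (Bd i) * (e (e.symm σ₀)) (B i)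
          rw [e.apply_symm_apply, e.apply_symm_apply, mul_comm]
      _ = 0 := h2
  -- common denominator
  obtain ⟨D, hD0, hDint⟩ := exists_integral_multiples ℤ ℚ (Finset.univ.image Bd)
  set Bd' : Fin (n+1) → K := fun i => (D : ℚ) • Bd i with hBd'
  have hBd'int : ∀ i, IsIntegral ℤ (Bd' i) := by
    intro i
    show IsIntegral ℤ ((D:ℚ) • Bd i)
    rw [Int.cast_smul_eq_zsmul ℚ]
    exact hDint (Bd i) (Finset.mem_image_of_mem _ (Finset.mem_univ i))
  have key' : ∀ σ : K →ₐ[ℚ] ℂ, σ ≠ σ₀ → ∑ i, σ₀ (B i) * σ (Bd' i) = 0 := by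
    intro σ hσ
    have : ∑ i, σ₀ (B i) * σ (Bd' i) = (D : ℂ) * ∑ i, σ₀ (B i) * σ (Bd i) := by
      rw [Finset.mul_sum]
      refine Finset.sum_congr rfl fun i _ => ?_
      rw [hBd']
      simp only [map_smul, Rat.smul_def, map_mul, map_ratCast, map_intCast]
      push_cast
      ring
    rw [this, key σ hσ, mul_zero]
  -- constants
  set C : ℝ := (∑ σ : K →ₐ[ℚ] ℂ, ∑ i, ‖σ (Bd' i)‖) + 1 with hC
  have hC1 : 1 ≤ C := by
    rw [hC]
    have : (0:ℝ) ≤ ∑ σ : K →ₐ[ℚ] ℂ, ∑ i, ‖σ (Bd' i)‖ := by positivity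
    linarith
  have hCb : ∀ σ : K →ₐ[ℚ] ℂ, ∑ i, ‖σ (Bd' i)‖ ≤ C := by
    intro σ
    rw [hC]
    have h1 : ∑ i, ‖σ (Bd' i)‖
        ≤ ∑ τ : K →ₐ[ℚ] ℂ, ∑ i, ‖τ (Bd' i)‖ :=
      Finset.single_le_sum (f := fun τ : K →ₐ[ℚ] ℂ => ∑ i, ‖τ (Bd' i)‖)
        (fun τ _ => by positivity) (Finset.mem_univ σ)
    linarith
  set X : ℝ := (∑ j, |x j|) + 2 with hX
  have hX1 : 1 ≤ X := by
    rw [hX]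
    have : (0:ℝ) ≤ ∑ j, |x j| := by positivity
    linarith
  have hXj : ∀ j, |x j| + 1 ≤ X := by
    intro j
    rw [hX]
    have h1 : |x j| ≤ ∑ j, |x j| :=
      Finset.single_le_sum (f := fun j => |x j|) (fun j _ => abs_nonneg _) (Finset.mem_univ j)
    linarith
  refine ⟨X * C ^ (n+1), ?_, ?_⟩
  · calc (1:ℝ) = 1 * 1 ^ (n+1) := by norm_num
      _ ≤ X * C ^ (n+1) := by
          apply mul_le_mul hX1 (pow_le_pow_left₀ (by norm_num) hC1 _) (by positivity) (by linarith)
  intro k hk p ε hε hε1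
  have hε0 : 0 ≤ ε := le_trans (abs_nonneg _) (hε ⟨0, hn⟩)
  -- the element ζ
  set c : Fin (n+1) → ℤ := Fin.cons (k : ℤ) p with hc
  set ζ : K := ∑ i, (c i : ℚ) • Bd' i with hζ
  have hζ2 : ζ = ∑ i, ((c i * D : ℤ) : ℚ) • Bd i := by
    rw [hζ]
    refine Finset.sum_congr rfl fun i _ => ?_
    rw [hBd', smul_smul]
    push_cast
    ring_nf
  have hζ0 : ζ ≠ 0 := by
    intro h0
    rw [hζ2] at h0
    have := Fintype.linearIndependent_iff.mp Bd.linearIndependent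
      (fun i => ((c i * D : ℤ) : ℚ)) h0 0
    rw [hc] at this
    simp only [Fin.cons_zero] at this
    have : (k : ℤ) * D = 0 := by exact_mod_cast this
    rcases mul_eq_zero.mp this with h | h
    · omega
    · exact hD0 h
  have hζint : IsIntegral ℤ ζ := by
    rw [hζ]
    apply IsIntegral.sum
    intro i _
    have h1 : ((c i : ℚ)) • Bd' i = c i • Bd' i := by
      rw [← Int.cast_smul_eq_zsmul ℚ]
    rw [h1, zsmul_eq_mul]
    refine IsIntegral.mul ?_ (hBd'int i)
    have h2 : ((c i : ℤ) : K) = algebraMap ℤ K (c i) := by simp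
    rw [h2]
    exact isIntegral_algebraMap
  -- the norm is a nonzero integer
  set q : ℚ := Algebra.norm ℚ ζ with hq
  have hq0 : q ≠ 0 := by
    rw [hq, Algebra.norm_ne_zero_iff]
    exact hζ0
  have hqint : IsIntegral ℤ q := Algebra.isIntegral_norm ℚ hζint
  obtain ⟨z, hz⟩ := IsIntegrallyClosed.isIntegral_iff.mp hqint
  have hq1 : (1:ℝ) ≤ |(q : ℝ)| := by
    have hzq : ((z : ℤ) : ℚ) = q := by exact_mod_cast hz
    have hz0 : z ≠ 0 := by rintro rfl; rw [← hzq] at hq0; simp at hq0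
    have h1 : (1:ℤ) ≤ |z| := Int.one_le_abs hz0
    have h2 : ((1:ℤ):ℝ) ≤ ((|z|:ℤ):ℝ) := Int.cast_le.mpr h1
    rw [← hzq]
    push_cast at h2 ⊢
    exact h2
  have heq : |(q : ℝ)| = ∏ σ : K →ₐ[ℚ] ℂ, ‖σ ζ‖ := by
    have h1 : algebraMap ℚ ℂ q = ∏ σ : K →ₐ[ℚ] ℂ, σ ζ :=
      Algebra.norm_eq_prod_embeddings ℚ ℂ ζ
    have h2 : ‖algebraMap ℚ ℂ q‖ = |(q : ℝ)| := by
      have : algebraMap ℚ ℂ q = (((q : ℝ) : ℂ)) := by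
        rw [eq_ratCast]
        push_cast
        rfl
      rw [this, Complex.norm_real, Real.norm_eq_abs]
    rw [← h2, h1]
    exact norm_prod _ _
  -- embedding values
  have hσapp : ∀ σ : K →ₐ[ℚ] ℂ, σ ζ = ∑ i, (c i : ℂ) * σ (Bd' i) := by
    intro σ
    rw [hζ, map_sum]
    refine Finset.sum_congr rfl fun i _ => ?_
    rw [Rat.smul_def, map_mul, map_ratCast]
    push_cast
    ring
  set ee : Fin (n+1) → ℂ := Fin.cons 0 (fun j => (((k : ℝ) * x j - p j : ℝ) : ℂ)) with hee
  have heec : ∀ i, (c i : ℂ) = (k : ℂ) * σ₀ (B i) - ee i := by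
    intro i
    refine Fin.cases ?_ (fun j => ?_) i
    · rw [hc, hee]
      simp only [Fin.cons_zero]
      rw [hBb 0, hb]
      simp only [Fin.cons_zero, map_one]
      push_cast
      ring
    · rw [hc, hee]
      simp only [Fin.cons_succ]
      rw [hBb j.succ, hb]
      simp only [Fin.cons_succ]
      rw [hσ₀app]
      push_cast
      ring
  have heeb : ∀ i, ‖ee i‖ ≤ ε := by
    intro i
    refine Fin.cases ?_ (fun j => ?_) i <;> rw [hee]
    · simpa using hε0
    · simp only [Fin.cons_succ, Complex.norm_real, Real.norm_eq_abs]
      exact hε j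
  have hsmall : ∀ σ : K →ₐ[ℚ] ℂ, σ ≠ σ₀ → ‖σ ζ‖ ≤ C * ε := by
    intro σ hσ
    rw [hσapp σ]
    have h1 : ∑ i, (c i : ℂ) * σ (Bd' i) = - ∑ i, ee i * σ (Bd' i) := by
      have h2 : ∑ i, (c i : ℂ) * σ (Bd' i)
          = (k:ℂ) * (∑ i, σ₀ (B i) * σ (Bd' i)) - ∑ i, ee i * σ (Bd' i) := by
        rw [Finset.mul_sum, ← Finset.sum_sub_distrib]
        refine Finset.sum_congr rfl fun i _ => ?_
        rw [heec i]
        ring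
      rw [h2, key' σ hσ, mul_zero, zero_sub]
    rw [h1, norm_neg]
    calc ‖∑ i, ee i * σ (Bd' i)‖ ≤ ∑ i, ‖ee i * σ (Bd' i)‖ :=
          norm_sum_le _ _
      _ ≤ ∑ i, ε * ‖σ (Bd' i)‖ := by
          refine Finset.sum_le_sum fun i _ => ?_
          rw [norm_mul]
          exact mul_le_mul_of_nonneg_right (heeb i) (norm_nonneg _)
      _ = ε * ∑ i, ‖σ (Bd' i)‖ := by rw [Finset.mul_sum]
      _ ≤ ε * C := mul_le_mul_of_nonneg_left (hCb σ) hε0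
      _ = C * ε := mul_comm _ _
  have hci : ∀ i, |((c i : ℤ) : ℝ)| ≤ k * X := by
    intro i
    have hk1 : (1:ℝ) ≤ (k:ℝ) := by exact_mod_cast hk
    refine Fin.cases ?_ (fun j => ?_) i <;> rw [hc]
    · simp only [Fin.cons_zero]
      rw [abs_of_nonneg (by positivity : (0:ℝ) ≤ ((k:ℤ):ℝ))]
      push_cast
      nlinarith [hX1]
    · simp only [Fin.cons_succ]
      have h1 : |((p j : ℤ) : ℝ)| ≤ (k:ℝ) * |x j| + ε := by
        have h2 : ((p j : ℤ) : ℝ) = (k:ℝ) * x j - ((k:ℝ) * x j - p j) := by push_cast; ring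
        rw [h2]
        calc |(k:ℝ) * x j - ((k:ℝ) * x j - p j)| ≤ |(k:ℝ) * x j| + |(k:ℝ) * x j - p j| :=
              abs_sub _ _
          _ ≤ (k:ℝ) * |x j| + ε := by
              rw [abs_mul, abs_of_nonneg (by positivity : (0:ℝ) ≤ (k:ℝ))]
              exact add_le_add le_rfl (hε j)
      have h3 := hXj j
      nlinarith [hε1, abs_nonneg (x j)]
  have hbig : ‖σ₀ ζ‖ ≤ ((k:ℝ) * X) * C := by
    rw [hσapp σ₀]
    calc ‖∑ i, (c i : ℂ) * σ₀ (Bd' i)‖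
        ≤ ∑ i, ‖(c i : ℂ) * σ₀ (Bd' i)‖ := norm_sum_le _ _
      _ ≤ ∑ i, ((k:ℝ) * X) * ‖σ₀ (Bd' i)‖ := by
          refine Finset.sum_le_sum fun i _ => ?_
          rw [norm_mul, Complex.norm_intCast]
          exact mul_le_mul_of_nonneg_right (hci i) (norm_nonneg _)
      _ = ((k:ℝ) * X) * ∑ i, ‖σ₀ (Bd' i)‖ := by rw [Finset.mul_sum]
      _ ≤ ((k:ℝ) * X) * C := by
          have hk0 : (0:ℝ) ≤ (k:ℝ) := by positivity
          exact mul_le_mul_of_nonneg_left (hCb σ₀) (by nlinarith [hX1])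
  -- combine
  have hsplit : ∏ σ : K →ₐ[ℚ] ℂ, ‖σ ζ‖
      = ‖σ₀ ζ‖ * ∏ σ ∈ Finset.univ.erase σ₀, ‖σ ζ‖ :=
    (Finset.mul_prod_erase Finset.univ _ (Finset.mem_univ σ₀)).symm
  have hcerase : (Finset.univ.erase σ₀).card = n := by
    rw [Finset.card_erase_of_mem (Finset.mem_univ σ₀), Finset.card_univ, hcardE]; omega
  have h2 : ∏ σ ∈ Finset.univ.erase σ₀, ‖σ ζ‖ ≤ (C * ε)^n := by
    calc ∏ σ ∈ Finset.univ.erase σ₀, ‖σ ζ‖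
        ≤ ∏ _σ ∈ Finset.univ.erase σ₀, (C * ε) :=
          Finset.prod_le_prod (fun σ _ => norm_nonneg _)
            (fun σ hσ => hsmall σ (Finset.ne_of_mem_erase hσ))
      _ = (C * ε)^n := by rw [Finset.prod_const, hcerase]
  have hfin : (1:ℝ) ≤ ((k:ℝ) * X * C) * (C * ε)^n := by
    calc (1:ℝ) ≤ |(q : ℝ)| := hq1
      _ = ‖σ₀ ζ‖ * ∏ σ ∈ Finset.univ.erase σ₀, ‖σ ζ‖ := by
          rw [heq, hsplit]
      _ ≤ ((k:ℝ) * X * C) * (C * ε)^n := by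
          apply mul_le_mul hbig h2 (Finset.prod_nonneg fun σ _ => norm_nonneg _)
          positivity
  have hring : ((k:ℝ) * X * C) * (C * ε)^n = X * C^(n+1) * k * ε^n := by
    rw [mul_pow, pow_succ]
    ring
  rw [hring] at hfin
  linarith

theorem stmt_13 (n : ℕ) (hn : 1 ≤ n) (x : Fin n → ℝ)
    (K : Subfield ℝ) (hK : Module.finrank ℚ K = n + 1)
    (hxK : ∀ j, x j ∈ K)
    (hli : LinearIndependent ℚ (Fin.cons (1 : ℝ) x : Fin (n + 1) → ℝ)) :
    ∃ c > (0:ℝ), ∀ k : ℕ, 1 ≤ k →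
      (⨆ j : Fin n, dnint (k * x j)) ≥ c * (k : ℝ) ^ (-(1 / n : ℝ)) := by
  obtain ⟨A, hA1, hA⟩ := core n hn x K hK hxK hli
  have hA0 : (0:ℝ) < A := lt_of_lt_of_le one_pos hA1
  have hn0 : (n:ℝ) ≠ 0 := by positivity
  refine ⟨A ^ (-(1/n : ℝ)), by positivity, ?_⟩
  intro k hk
  have hk0 : (0:ℝ) < (k:ℝ) := by exact_mod_cast hk
  obtain ⟨j₀, _, hj₀⟩ := Finset.exists_max_image Finset.univ
    (fun j : Fin n => |(k:ℝ) * x j - round ((k:ℝ) * x j)|) ⟨⟨0, hn⟩, Finset.mem_univ _⟩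
  set ε : ℝ := |(k:ℝ) * x j₀ - round ((k:ℝ) * x j₀)| with hεdef
  have h1 : 1 ≤ A * k * ε ^ n := by
    refine hA k hk (fun j => round ((k:ℝ) * x j)) ε (fun j => hj₀ j (Finset.mem_univ _)) ?_
    exact le_trans (abs_sub_round _) (by norm_num)
  have hε0 : 0 < ε := by
    rcases lt_or_eq_of_le (abs_nonneg ((k:ℝ) * x j₀ - round ((k:ℝ) * x j₀))) with h | h
    · exact h
    · exfalso
      rw [hεdef, ← h, zero_pow (by omega : n ≠ 0), mul_zero] at h1
      linarith
  have hAk : (0:ℝ) < A * k := by positivity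
  have h2 : (A * (k:ℝ))⁻¹ ≤ ε ^ n := by
    rw [inv_eq_one_div, div_le_iff₀ hAk]
    nlinarith [h1]
  have h3 : ((A * (k:ℝ))⁻¹) ^ (1/(n:ℝ)) ≤ (ε ^ n) ^ (1/(n:ℝ)) :=
    Real.rpow_le_rpow (by positivity) h2 (by positivity)
  have h4 : ((ε ^ n : ℝ)) ^ (1/(n:ℝ)) = ε := by
    rw [← Real.rpow_natCast ε n, ← Real.rpow_mul hε0.le, mul_one_div, div_self hn0,
      Real.rpow_one]
  have h5 : ((A * (k:ℝ))⁻¹) ^ (1/(n:ℝ)) = A ^ (-(1/n:ℝ)) * (k:ℝ) ^ (-(1/n:ℝ)) := by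
    rw [Real.inv_rpow (by positivity), Real.mul_rpow hA0.le hk0.le, mul_inv,
      ← Real.rpow_neg hA0.le, ← Real.rpow_neg hk0.le]
  have h6 : A ^ (-(1/n:ℝ)) * (k:ℝ) ^ (-(1/n:ℝ)) ≤ ε := by
    rw [← h5]
    exact le_trans h3 (le_of_eq h4)
  have h7 : dnint ((k:ℝ) * x j₀) ≤ ⨆ j : Fin n, dnint ((k:ℝ) * x j) := by
    have : Nonempty (Fin n) := ⟨⟨0, hn⟩⟩
    exact le_ciSup (f := fun j : Fin n => dnint ((k:ℝ) * x j)) (Set.finite_range _).bddAbove j₀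
  have h8 : dnint ((k:ℝ) * x j₀) = ε := dnint_eq _
  rw [ge_iff_le]
  calc A ^ (-(1/n:ℝ)) * (k:ℝ) ^ (-(1/n:ℝ)) ≤ ε := h6
    _ = dnint ((k:ℝ) * x j₀) := h8.symm
    _ ≤ ⨆ j : Fin n, dnint ((k:ℝ) * x j) := h7
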